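/- Suppose the value function g has curvature at most α for some α ∈ [0,1]. Then for every item i ∈ {1,…,n}, the replication test score satisfies r_i ≥ (1−α)·k_i·E[g({X_i})], where E[g({X_i})] is the expected value of g applied to the singleton multiset containing the value of item i. -/

import Mathlib

open MeasureTheory ProbabilityTheory Finset

/-- Monotonicity of a value function on multisets of nonnegative reals. -/
def ValMonotone (g : Multiset NNReal → ℝ) : Prop :=
  ∀ ⦃s t : Multiset NNReal⦄, s ≤ t → g s ≤ g t

/-- The diminishing returns property of a value function. -/
def DiminishingReturns (g : Multiset NNReal → ℝ) : Prop :=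
  ∀ ⦃s t : Multiset NNReal⦄, s ≤ t → ∀ z : NNReal, g (z ::ₘ t) - g t ≤ g (z ::ₘ s) - g s

/-- The extended diminishing returns property of a value function. -/
def ExtendedDiminishingReturns (g : Multiset NNReal → ℝ) : Prop :=
  DiminishingReturns g ∧
    ∀ v : ℝ, (∃ s : Multiset NNReal, g s = v) →
      ∃ y : Multiset NNReal, g y = v ∧
        ∀ x : Multiset NNReal, g x ≤ v → ∀ z : NNReal, g (z ::ₘ y) - g y ≤ g (z ::ₘ x) - g x

/-- Continuity of a value function on multisets of each fixed size. -/
def ValContinuous (g : Multiset NNReal → ℝ) : Prop :=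
  ∀ m : ℕ, Continuous fun x : Fin m → NNReal => g (List.ofFn x)

/-- The value function `g` has curvature at most `α`. -/
def CurvatureLE (g : Multiset NNReal → ℝ) (α : ℝ) : Prop :=
  ∀ ⦃s t : Multiset NNReal⦄, s ≤ t → ∀ z : NNReal,
    (1 - α) * (g (z ::ₘ s) - g s) ≤ g (z ::ₘ t) - g t

/-- The stochastic utility of a set of items: `u(S) = E[g({X_i : i ∈ S})]`. -/
noncomputable def utility {Ω : Type} [MeasurableSpace Ω] (μ : Measure Ω) {n : ℕ}
    (g : Multiset NNReal → ℝ) (X : Fin n → Ω → NNReal) (S : Finset (Fin n)) : ℝ :=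
  ∫ ω, g (Multiset.map (fun i => X i ω) S.val) ∂μ

/-- The replication test score of item `i`: expected value of `g` on `k i` i.i.d. copies. -/
noncomputable def testScore {n : ℕ} (g : Multiset NNReal → ℝ)
    (P : Fin n → Measure NNReal) (k : Fin n → ℕ) (i : Fin n) : ℝ :=
  ∫ x : Fin (k i) → NNReal, g (List.ofFn x) ∂(Measure.pi fun _ => P i)

/-- The relative cost `d(S) = ∑_{i ∈ S} 1 / k_i`. -/
noncomputable def relCost {n : ℕ} (k : Fin n → ℕ) (S : Finset (Fin n)) : ℝ :=
  ∑ i ∈ S, ((k i : ℝ))⁻¹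

open scoped ENNReal

/-- Auxiliary: lower bound for the integral of a measurable function dominating
`c + β * G` a.e., in terms of an "upper integral" bound `V` for `G`. -/
lemma aux_lemC {P : Measure NNReal} [IsProbabilityMeasure P] (G : NNReal → ℝ≥0∞)
    (β : ℝ≥0∞) (hβ : β ≠ ∞) (V : ℝ≥0∞)
    (hV : ∀ φ : NNReal → ℝ≥0∞, Measurable φ → (∀ y, G y ≤ φ y) → V ≤ ∫⁻ y, φ y ∂P)
    (c : ℝ≥0∞) (Φ : NNReal → ℝ≥0∞) (hΦ : Measurable Φ)
    (h : ∀ᵐ x ∂P, c + β * G x ≤ Φ x) : c + β * V ≤ ∫⁻ x, Φ x ∂P := by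
  by_cases hβ0 : β = 0
  · have h' : ∀ᵐ x ∂P, c ≤ Φ x := by
      filter_upwards [h] with x hx
      simpa [hβ0] using hx
    have : c = ∫⁻ _ : NNReal, c ∂P := by simp
    rw [hβ0, zero_mul, add_zero, this]
    exact lintegral_mono_ae h'
  by_cases hc : c = ∞
  · have h' : ∀ᵐ x ∂P, (⊤ : ℝ≥0∞) ≤ Φ x := by
      filter_upwards [h] with x hx
      exact le_trans (by simp [hc]) (le_trans le_self_add hx)
    have : (⊤ : ℝ≥0∞) = ∫⁻ _ : NNReal, ⊤ ∂P := by simp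
    calc c + β * V ≤ ⊤ := le_top
      _ = ∫⁻ _ : NNReal, ⊤ ∂P := this
      _ ≤ ∫⁻ x, Φ x ∂P := lintegral_mono_ae h'
  -- main case
  classical
  have hnull : P {x | ¬ (c + β * G x ≤ Φ x)} = 0 := h
  obtain ⟨t, hsub, htm, ht0⟩ := exists_measurable_superset_of_null hnull
  set φ : NNReal → ℝ≥0∞ := fun x => if x ∈ t then ⊤ else (Φ x - c) / β with hφdef
  have hφm : Measurable φ :=
    Measurable.ite htm measurable_const ((hΦ.sub measurable_const).div_const β)
  have hGφ : ∀ y, G y ≤ φ y := by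
    intro y
    by_cases hy : y ∈ t
    · simp [hφdef, hy]
    · have hgood : c + β * G y ≤ Φ y := by
        by_contra hbad
        exact hy (hsub hbad)
      have h1 : β * G y ≤ Φ y - c := ENNReal.le_sub_of_add_le_left hc hgood
      have h2 : G y ≤ (Φ y - c) / β := by
        rw [ENNReal.le_div_iff_mul_le (Or.inl hβ0) (Or.inl hβ)]
        rwa [mul_comm]
      simpa [hφdef, hy] using h2
  have hVφ : V ≤ ∫⁻ y, φ y ∂P := hV φ hφm hGφ
  have heq : ∫⁻ y, φ y ∂P = ∫⁻ y, (Φ y - c) / β ∂P := by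
    apply lintegral_congr_ae
    have : {y | ¬ (φ y = (Φ y - c) / β)} ⊆ t := by
      intro y hy
      by_contra hyt
      exact hy (by simp [hφdef, hyt])
    exact measure_mono_null this ht0
  have hdiv : ∫⁻ y, (Φ y - c) / β ∂P = (∫⁻ y, Φ y - c ∂P) * β⁻¹ := by
    simp_rw [div_eq_mul_inv]
    exact lintegral_mul_const _ (hΦ.sub measurable_const)
  have hβV : β * V ≤ ∫⁻ y, Φ y - c ∂P := by
    calc β * V ≤ β * ((∫⁻ y, Φ y - c ∂P) * β⁻¹) := by
          apply mul_le_mul_right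
          rw [← hdiv, ← heq]; exact hVφ
      _ = ∫⁻ y, Φ y - c ∂P := by
          rw [mul_comm ((∫⁻ y, Φ y - c ∂P)) β⁻¹, ← mul_assoc,
            ENNReal.mul_inv_cancel hβ0 hβ, one_mul]
  have hfinal : c + ∫⁻ y, Φ y - c ∂P ≤ ∫⁻ x, Φ x ∂P := by
    have h1 : (∫⁻ _ : NNReal, c ∂P) + ∫⁻ y, Φ y - c ∂P = ∫⁻ y, c + (Φ y - c) ∂P :=
      (lintegral_add_left measurable_const _).symm
    have h2 : ∫⁻ y, c + (Φ y - c) ∂P ≤ ∫⁻ x, Φ x ∂P := by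
      apply lintegral_mono_ae
      filter_upwards [h] with y hy
      have hcy : c ≤ Φ y := le_trans le_self_add hy
      rw [add_tsub_cancel_of_le hcy]
    calc c + ∫⁻ y, Φ y - c ∂P = (∫⁻ _ : NNReal, c ∂P) + ∫⁻ y, Φ y - c ∂P := by simp
      _ = ∫⁻ y, c + (Φ y - c) ∂P := h1
      _ ≤ ∫⁻ x, Φ x ∂P := h2
  calc c + β * V ≤ c + ∫⁻ y, Φ y - c ∂P := add_le_add_right hβV c
    _ ≤ ∫⁻ x, Φ x ∂P := hfinal

set_option maxHeartbeats 1000000 in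
/-- Auxiliary: the key product-measure lower bound, by induction on the number
of coordinates. -/
lemma aux_lemB {P : Measure NNReal} [IsProbabilityMeasure P] (G : NNReal → ℝ≥0∞)
    (β : ℝ≥0∞) (hβ : β ≠ ∞) (V : ℝ≥0∞)
    (hV : ∀ φ : NNReal → ℝ≥0∞, Measurable φ → (∀ y, G y ≤ φ y) → V ≤ ∫⁻ y, φ y ∂P) :
    ∀ (m : ℕ) (c : ℝ≥0∞) (H : (Fin m → NNReal) → ℝ≥0∞), Measurable H →
      (∀ᵐ x ∂(Measure.pi fun _ : Fin m => P), c + β * ∑ j, G (x j) ≤ H x) →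
      c + β * m * V ≤ ∫⁻ x, H x ∂(Measure.pi fun _ : Fin m => P) := by
  intro m
  induction m with
  | zero =>
    intro c H hHm hae
    have h' : ∀ᵐ x ∂(Measure.pi fun _ : Fin 0 => P), c ≤ H x := by
      filter_upwards [hae] with x hx
      simpa using hx
    have : c = ∫⁻ _ : (Fin 0 → NNReal), c ∂(Measure.pi fun _ : Fin 0 => P) := by simp
    calc c + β * (0 : ℕ) * V = c := by simp
      _ = ∫⁻ _ : (Fin 0 → NNReal), c ∂(Measure.pi fun _ : Fin 0 => P) := this
      _ ≤ _ := lintegral_mono_ae h'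
  | succ m ih =>
    intro c H hHm hae
    set e := MeasurableEquiv.piFinSuccAbove (fun _ : Fin (m + 1) => NNReal) 0 with he
    have mp : MeasurePreserving e (Measure.pi fun _ : Fin (m + 1) => P)
        (P.prod (Measure.pi fun _ : Fin m => P)) :=
      measurePreserving_piFinSuccAbove (fun _ : Fin (m + 1) => P) 0
    have hcons : ∀ (x : NNReal) (y : Fin m → NNReal), e.symm (x, y) = Fin.cons x y := by
      intro x y
      simp [he, MeasurableEquiv.piFinSuccAbove_symm_apply, Fin.insertNthEquiv,
        Fin.insertNth_zero']
    have hint : ∫⁻ x, H x ∂(Measure.pi fun _ : Fin (m + 1) => P)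
        = ∫⁻ z, H (e.symm z) ∂(P.prod (Measure.pi fun _ : Fin m => P)) :=
      ((mp.symm e).lintegral_comp hHm).symm
    have hae' : ∀ᵐ z ∂(P.prod (Measure.pi fun _ : Fin m => P)),
        c + β * ∑ j, G ((e.symm z) j) ≤ H (e.symm z) :=
      (mp.symm e).quasiMeasurePreserving.tendsto_ae.eventually hae
    have hae'' : ∀ᵐ x ∂P, ∀ᵐ y ∂(Measure.pi fun _ : Fin m => P),
        (c + β * G x) + β * ∑ j, G (y j) ≤ H (e.symm (x, y)) := by
      filter_upwards [Measure.ae_ae_of_ae_prod hae'] with x hx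
      filter_upwards [hx] with y hy
      have hsum : (∑ j, G ((e.symm (x, y)) j)) = G x + ∑ j, G (y j) := by
        rw [hcons]
        simp [Fin.sum_univ_succ]
      calc (c + β * G x) + β * ∑ j, G (y j)
          = c + β * ∑ j, G ((e.symm (x, y)) j) := by rw [hsum, mul_add]; ring
        _ ≤ H (e.symm (x, y)) := hy
    obtain ⟨Φ, hΦdef⟩ : ∃ Φ : NNReal → ℝ≥0∞,
        Φ = fun x => ∫⁻ y, H (e.symm (x, y)) ∂(Measure.pi fun _ : Fin m => P) := ⟨_, rfl⟩
    have hHe : Measurable fun z : NNReal × (Fin m → NNReal) => H (e.symm z) :=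
      hHm.comp e.symm.measurable
    have hΦm : Measurable Φ := by
      rw [hΦdef]; exact Measurable.lintegral_prod_right hHe
    have hΦlb : ∀ᵐ x ∂P, (c + β * ↑m * V) + β * G x ≤ Φ x := by
      filter_upwards [hae''] with x hx
      have h2 := ih (c + β * G x) (fun y => H (e.symm (x, y)))
        (hHe.comp (measurable_prodMk_left)) hx
      rw [hΦdef]
      calc (c + β * ↑m * V) + β * G x = (c + β * G x) + β * ↑m * V := by ring
        _ ≤ _ := h2
    have hC : (c + β * (m:ℝ≥0∞) * V) + β * V ≤ ∫⁻ x, Φ x ∂P :=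
      aux_lemC G β hβ V hV (c + β * (m:ℝ≥0∞) * V) Φ hΦm hΦlb
    have hfub : ∫⁻ x, Φ x ∂P
        = ∫⁻ z, H (e.symm z) ∂(P.prod (Measure.pi fun _ : Fin m => P)) := by
      rw [hΦdef]
      exact (lintegral_prod _ hHe.aemeasurable).symm
    calc c + β * ↑(m + 1) * V = (c + β * ↑m * V) + β * V := by
          push_cast; ring
      _ ≤ ∫⁻ x, Φ x ∂P := hC
      _ = ∫⁻ x, H x ∂(Measure.pi fun _ : Fin (m + 1) => P) := by rw [hfub, hint]

/-- Auxiliary: pointwise telescoping bound from curvature. -/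
lemma aux_lemA (g : Multiset NNReal → ℝ) (hg0 : g 0 = 0) (α : ℝ)
    (hcurv : CurvatureLE g α) :
    ∀ t : Multiset NNReal, (1 - α) * (t.map fun z => g {z}).sum ≤ g t := by
  intro t
  induction t using Multiset.induction with
  | empty => simp [hg0]
  | cons z t ih =>
    have h := hcurv (Multiset.zero_le t) z
    rw [hg0, sub_zero] at h
    rw [Multiset.map_cons, Multiset.sum_cons, mul_add]
    have hz : g (z ::ₘ 0) = g {z} := rfl
    rw [hz] at h
    linarith

/-- if `g` has curvature at most `α`, then the replication test score
satisfies `r_i ≥ (1−α)·k_i·E[g({X_i})]`. -/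
theorem stmt19 {Ω : Type} [MeasurableSpace Ω] (μ : Measure Ω) [IsProbabilityMeasure μ]
    {n : ℕ} (hn : 1 ≤ n)
    (c : Fin n → ℝ) (B : ℝ) (hB : 0 < B) (hc : ∀ i, 0 < c i) (hcB : ∀ i, c i ≤ B)
    (k : Fin n → ℕ) (hk : ∀ i, k i = ⌊B / c i⌋₊)
    (X : Fin n → Ω → NNReal) (hXmeas : ∀ i, Measurable (X i))
    (P : Fin n → Measure NNReal) [∀ i, IsProbabilityMeasure (P i)]
    (hlaw : ∀ i, μ.map (X i) = P i)
    (hindep : iIndepFun X μ)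
    (g : Multiset NNReal → ℝ) (hg0 : g 0 = 0) (hgnn : ∀ s, 0 ≤ g s)
    (α : ℝ) (hα0 : 0 ≤ α) (hα1 : α ≤ 1) (hcurv : CurvatureLE g α)
    (hIntu : ∀ S : Finset (Fin n),
      Integrable (fun ω => g (Multiset.map (fun i => X i ω) S.val)) μ)
    (hIntr : ∀ i, Integrable (fun x : Fin (k i) → NNReal => g (List.ofFn x))
      (Measure.pi fun _ => P i)) :
    ∀ i : Fin n,
      (1 - α) * (k i : ℝ) * (∫ ω, g {X i ω} ∂μ) ≤ testScore g P k i := by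
  intro i
  set m := k i with hm
  set π := (Measure.pi fun _ : Fin m => P i) with hπ
  set F : (Fin m → NNReal) → ℝ := fun x => g (List.ofFn x) with hF
  have hFint : Integrable F π := hIntr i
  set G : NNReal → ℝ≥0∞ := fun y => ENNReal.ofReal (g {y}) with hG
  set β : ℝ≥0∞ := ENNReal.ofReal (1 - α) with hβdef
  have hβ : β ≠ ∞ := ENNReal.ofReal_ne_top
  -- integrability of the singleton utility
  have hIsing : Integrable (fun ω => g {X i ω}) μ := by
    have := hIntu {i}
    simpa using this
  set W : ℝ≥0∞ := ∫⁻ ω, G (X i ω) ∂μ with hW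
  -- the goal's integral as a toReal of a lintegral
  have hInn : 0 ≤ᵐ[μ] fun ω => g {X i ω} := Filter.Eventually.of_forall fun ω => hgnn _
  have hIeq : ∫ ω, g {X i ω} ∂μ = W.toReal :=
    integral_eq_lintegral_of_nonneg_ae hInn hIsing.aestronglyMeasurable
  have hWfin : W ≠ ∞ := by
    have h1 : W ≤ ∫⁻ ω, ‖g {X i ω}‖₊ ∂μ :=
      lintegral_mono fun ω => Real.ofReal_le_enorm _
    exact ne_top_of_le_ne_top hIsing.hasFiniteIntegral.ne h1
  -- the upper-integral property of W
  have hV : ∀ φ : NNReal → ℝ≥0∞, Measurable φ → (∀ y, G y ≤ φ y) →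
      W ≤ ∫⁻ y, φ y ∂(P i) := by
    intro φ hφ hGφ
    rw [← hlaw i, lintegral_map hφ (hXmeas i)]
    exact lintegral_mono fun ω => hGφ (X i ω)
  -- a measurable modification of F in ℝ≥0∞
  obtain ⟨F', hF'm, hF'eq⟩ := hFint.aestronglyMeasurable
  set H : (Fin m → NNReal) → ℝ≥0∞ := fun x => ENNReal.ofReal (F' x) with hH
  have hHm : Measurable H := ENNReal.measurable_ofReal.comp hF'm.measurable
  -- the pointwise (a.e.) bound
  have hptwise : ∀ x : Fin m → NNReal, (1 - α) * ∑ j, g {x j} ≤ F x := by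
    intro x
    have := aux_lemA g hg0 α hcurv (List.ofFn x)
    have hsum : ((List.ofFn x : Multiset NNReal).map fun z => g {z}).sum
        = ∑ j, g {x j} := by
      simp [Multiset.map_coe, List.map_ofFn, List.sum_ofFn, Function.comp]
    rw [hsum] at this
    exact this
  have haeH : ∀ᵐ x ∂π, (0 : ℝ≥0∞) + β * ∑ j, G (x j) ≤ H x := by
    filter_upwards [hF'eq] with x hx
    rw [zero_add]
    have h1 : β * ∑ j, G (x j) = ENNReal.ofReal ((1 - α) * ∑ j, g {x j}) := by
      rw [ENNReal.ofReal_mul (by linarith : (0:ℝ) ≤ 1 - α),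
        ENNReal.ofReal_sum_of_nonneg fun j _ => hgnn _]
    rw [h1]
    have h2 : ENNReal.ofReal ((1 - α) * ∑ j, g {x j}) ≤ ENNReal.ofReal (F' x) :=
      ENNReal.ofReal_le_ofReal (hx ▸ hptwise x)
    exact h2
  -- apply the main lemma
  have hB := aux_lemB G β hβ W hV m 0 H hHm haeH
  rw [zero_add] at hB
  -- identify ∫⁻ H with the lintegral of F
  set T : ℝ≥0∞ := ∫⁻ x, ENNReal.ofReal (F x) ∂π with hT
  have hHT : ∫⁻ x, H x ∂π = T := by
    apply lintegral_congr_ae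
    filter_upwards [hF'eq] with x hx
    rw [hH, hx]
  have hTfin : T ≠ ∞ := by
    have h1 : T ≤ ∫⁻ x, ‖F x‖₊ ∂π :=
      lintegral_mono fun x => Real.ofReal_le_enorm _
    exact ne_top_of_le_ne_top hFint.hasFiniteIntegral.ne h1
  have hFnn : 0 ≤ᵐ[π] F := Filter.Eventually.of_forall fun x => hgnn _
  have hTS : testScore g P k i = T.toReal :=
    integral_eq_lintegral_of_nonneg_ae hFnn hFint.aestronglyMeasurable
  rw [hHT] at hB
  -- conclude
  have hmono : (β * ↑m * W).toReal ≤ T.toReal := ENNReal.toReal_mono hTfin hB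
  have hcomp : (β * ↑m * W).toReal = (1 - α) * (m : ℝ) * W.toReal := by
    rw [ENNReal.toReal_mul, ENNReal.toReal_mul, ENNReal.toReal_ofReal (by linarith),
      ENNReal.toReal_natCast]
  rw [hIeq, hTS, ← hcomp]
  exact hmono
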